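/- arXiv:1303.1216 — 3 statements merged into one kernel-verified Lean document; each statement's English description precedes it below -/
import Mathlib

section
/- Let Γ¹, …, Γ⁵ be pre-Hilbert A-modules and Γ¹ →^{D₁} Γ² →^{D₂} Γ³ →^{D₃} Γ⁴ →^{D₄} Γ⁵ a complex of adjointable morphisms (D_{i+1} ∘ D_i = 0). Let Δ_i = D_{i-1} ∘ D_{i-1}* + D_i* ∘ D_i (with D₀ := 0). Suppose for i = 1,…,4 there exist morphisms g_i, p_i : Γⁱ → Γⁱ with 1 = g_i ∘ Δ_i + p_i, 1 = Δ_i ∘ g_i + p_i, and Δ_i ∘ p_i = 0. Then p_{i+1} ∘ D_i = 0 for i = 1, 2, 3. -/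
/-- A pre-Hilbert module over a unital C*-algebra `A`: a left `A`-module equipped with an
`A`-valued inner product (`A`-linear in the first argument, conjugate-symmetric, positive
definite), whose norm is the one induced by the inner product. -/
class PreHilbertModule (A : Type*) (U : Type*) [CStarAlgebra A] [PartialOrder A]
    [StarOrderedRing A] [NormedAddCommGroup U] [Module A U] extends Inner A U where
  inner_add_left (x y z : U) : inner (x + y) z = inner x z + inner y z
  inner_smul_left (a : A) (x y : U) : inner (a • x) y = a * inner x y
  star_inner (x y : U) : star (inner x y) = inner y x
  inner_self_nonneg (x : U) : 0 ≤ inner x x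
  inner_self_eq_zero (x : U) : inner x x = 0 ↔ x = 0
  norm_eq (x : U) : ‖x‖ = Real.sqrt ‖inner x x‖

section Aux

variable {A : Type*} [CStarAlgebra A] [PartialOrder A] [StarOrderedRing A]

lemma PreHilbertModule.inner_zero_left {U : Type*} [NormedAddCommGroup U] [Module A U]
    [PreHilbertModule A U] (x : U) : (inner A (0 : U) x : A) = 0 := by
  have h := PreHilbertModule.inner_add_left (A := A) (0 : U) 0 x
  simpa using h.symm

lemma PreHilbertModule.inner_zero_right {U : Type*} [NormedAddCommGroup U] [Module A U]
    [PreHilbertModule A U] (x : U) : (inner A x (0 : U) : A) = 0 := by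
  have := PreHilbertModule.star_inner (A := A) (0 : U) x
  rw [PreHilbertModule.inner_zero_left, star_zero] at this
  exact this.symm

/-- Key auxiliary lemma: if `Δ = D ∘ D* + E* ∘ E`, `id = Δ ∘ g + p`, `Δ ∘ p = 0`,
then `p ∘ D = 0`. -/
lemma parametrix_aux {U V W : Type*}
    [NormedAddCommGroup U] [Module A U] [PreHilbertModule A U]
    [NormedAddCommGroup V] [Module A V] [PreHilbertModule A V]
    [NormedAddCommGroup W] [Module A W] [PreHilbertModule A W]
    (D : U →L[A] V) (Ds : V →L[A] U) (E : V →L[A] W) (Es : W →L[A] V)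
    (hD : ∀ u v, (inner A (D u) v : A) = inner A u (Ds v))
    (hE : ∀ u v, (inner A (E u) v : A) = inner A u (Es v))
    (Δ : V →L[A] V) (hΔ : Δ = D.comp Ds + Es.comp E)
    (g p : V →L[A] V)
    (hb : ContinuousLinearMap.id A V = Δ.comp g + p)
    (hc : Δ.comp p = 0) : p.comp D = 0 := by
  ext x
  simp only [ContinuousLinearMap.comp_apply, ContinuousLinearMap.zero_apply]
  set v := p (D x) with hv
  have hΔv : Δ v = 0 := by
    have := congrArg (fun (L : V →L[A] V) => L (D x)) hc
    simpa using this
  -- From Δ v = 0, both Ds v = 0 and E v = 0.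
  have hsum : (inner A (Ds v) (Ds v) : A) + inner A (E v) (E v) = 0 := by
    have h0 : (inner A (Δ v) v : A) = 0 := by
      rw [hΔv, PreHilbertModule.inner_zero_left]
    rw [hΔ] at h0
    simp only [ContinuousLinearMap.add_apply, ContinuousLinearMap.comp_apply] at h0
    rw [PreHilbertModule.inner_add_left, hD] at h0
    have hEs : (inner A (Es (E v)) v : A) = inner A (E v) (E v) := by
      calc (inner A (Es (E v)) v : A) = star (inner A v (Es (E v)) : A) := by
            rw [PreHilbertModule.star_inner]
        _ = star (inner A (E v) (E v) : A) := by rw [hE]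
        _ = inner A (E v) (E v) := PreHilbertModule.star_inner _ _
    rw [hEs] at h0
    exact h0
  have hDsv : Ds v = 0 := by
    have hnn1 := PreHilbertModule.inner_self_nonneg (A := A) (Ds v)
    have hnn2 := PreHilbertModule.inner_self_nonneg (A := A) (E v)
    have hle : (inner A (Ds v) (Ds v) : A) ≤ 0 := by
      calc (inner A (Ds v) (Ds v) : A)
          ≤ inner A (Ds v) (Ds v) + inner A (E v) (E v) := le_add_of_nonneg_right hnn2
        _ = 0 := hsum
    have h1 : (inner A (Ds v) (Ds v) : A) = 0 := le_antisymm hle hnn1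
    exact (PreHilbertModule.inner_self_eq_zero _).mp h1
  have hEv : E v = 0 := by
    have hnn1 := PreHilbertModule.inner_self_nonneg (A := A) (Ds v)
    have hnn2 := PreHilbertModule.inner_self_nonneg (A := A) (E v)
    have hle : (inner A (E v) (E v) : A) ≤ 0 := by
      calc (inner A (E v) (E v) : A)
          ≤ inner A (Ds v) (Ds v) + inner A (E v) (E v) := le_add_of_nonneg_left hnn1
        _ = 0 := hsum
    have h1 : (inner A (E v) (E v) : A) = 0 := le_antisymm hle hnn2
    exact (PreHilbertModule.inner_self_eq_zero _).mp h1
  -- Now show inner v v = 0.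
  have hdecomp : D x = Δ (g (D x)) + v := by
    have := congrArg (fun (L : V →L[A] V) => L (D x)) hb
    simpa using this
  have hvv : (inner A v v : A) = 0 := by
    have h1 : (inner A (D x) v : A) = inner A (Δ (g (D x))) v + inner A v v := by
      conv_lhs => rw [hdecomp]
      exact PreHilbertModule.inner_add_left (A := A) _ _ _
    have h2 : (inner A (D x) v : A) = 0 := by
      rw [hD, hDsv, PreHilbertModule.inner_zero_right]
    have h3 : (inner A (Δ (g (D x))) v : A) = 0 := by
      rw [hΔ]
      simp only [ContinuousLinearMap.add_apply, ContinuousLinearMap.comp_apply]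
      rw [PreHilbertModule.inner_add_left, hD, hDsv, PreHilbertModule.inner_zero_right]
      have : (inner A (Es (E (g (D x)))) v : A) = inner A (E (g (D x))) (E v) := by
        calc (inner A (Es (E (g (D x)))) v : A)
            = star (inner A v (Es (E (g (D x)))) : A) := by rw [PreHilbertModule.star_inner]
          _ = star (inner A (E v) (E (g (D x))) : A) := by rw [hE]
          _ = inner A (E (g (D x))) (E v) := PreHilbertModule.star_inner _ _
      rw [this, hEv, PreHilbertModule.inner_zero_right, add_zero]
    rw [h1, h3, zero_add] at h2
    exact h2
  exact (PreHilbertModule.inner_self_eq_zero v).mp hvv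

end Aux

/-- part of Theorem 3: for a length-five complex of adjointable morphisms of
pre-Hilbert `A`-modules possessing parametrices `g_i, p_i` for the associated Laplacians
`Δ_i = D_{i-1} ∘ D_{i-1}* + D_i* ∘ D_i` (with `D₀ := 0`), one has `p_{i+1} ∘ D_i = 0` for
`i = 1, 2, 3`. -/
theorem parametrix_proj_comp_differential_eq_zero
    {A : Type*} [CStarAlgebra A] [PartialOrder A] [StarOrderedRing A]
    {Γ1 Γ2 Γ3 Γ4 Γ5 : Type*}
    [NormedAddCommGroup Γ1] [Module A Γ1] [PreHilbertModule A Γ1]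
    [NormedAddCommGroup Γ2] [Module A Γ2] [PreHilbertModule A Γ2]
    [NormedAddCommGroup Γ3] [Module A Γ3] [PreHilbertModule A Γ3]
    [NormedAddCommGroup Γ4] [Module A Γ4] [PreHilbertModule A Γ4]
    [NormedAddCommGroup Γ5] [Module A Γ5] [PreHilbertModule A Γ5]
    (D1 : Γ1 →L[A] Γ2) (D2 : Γ2 →L[A] Γ3) (D3 : Γ3 →L[A] Γ4) (D4 : Γ4 →L[A] Γ5)
    (D1s : Γ2 →L[A] Γ1) (D2s : Γ3 →L[A] Γ2) (D3s : Γ4 →L[A] Γ3) (D4s : Γ5 →L[A] Γ4)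
    (hD1 : ∀ u v, (inner A (D1 u) v : A) = inner A u (D1s v))
    (hD2 : ∀ u v, (inner A (D2 u) v : A) = inner A u (D2s v))
    (hD3 : ∀ u v, (inner A (D3 u) v : A) = inner A u (D3s v))
    (hD4 : ∀ u v, (inner A (D4 u) v : A) = inner A u (D4s v))
    (hc1 : D2.comp D1 = 0) (hc2 : D3.comp D2 = 0) (hc3 : D4.comp D3 = 0)
    -- the associated Laplacians (with `D₀ := 0`)
    (Δ1 : Γ1 →L[A] Γ1) (Δ2 : Γ2 →L[A] Γ2) (Δ3 : Γ3 →L[A] Γ3) (Δ4 : Γ4 →L[A] Γ4)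
    (hΔ1 : Δ1 = D1s.comp D1)
    (hΔ2 : Δ2 = D1.comp D1s + D2s.comp D2)
    (hΔ3 : Δ3 = D2.comp D2s + D3s.comp D3)
    (hΔ4 : Δ4 = D3.comp D3s + D4s.comp D4)
    -- the parametrices
    (g1 p1 : Γ1 →L[A] Γ1) (g2 p2 : Γ2 →L[A] Γ2) (g3 p3 : Γ3 →L[A] Γ3) (g4 p4 : Γ4 →L[A] Γ4)
    (h1a : ContinuousLinearMap.id A Γ1 = g1.comp Δ1 + p1)
    (h1b : ContinuousLinearMap.id A Γ1 = Δ1.comp g1 + p1)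
    (h1c : Δ1.comp p1 = 0)
    (h2a : ContinuousLinearMap.id A Γ2 = g2.comp Δ2 + p2)
    (h2b : ContinuousLinearMap.id A Γ2 = Δ2.comp g2 + p2)
    (h2c : Δ2.comp p2 = 0)
    (h3a : ContinuousLinearMap.id A Γ3 = g3.comp Δ3 + p3)
    (h3b : ContinuousLinearMap.id A Γ3 = Δ3.comp g3 + p3)
    (h3c : Δ3.comp p3 = 0)
    (h4a : ContinuousLinearMap.id A Γ4 = g4.comp Δ4 + p4)
    (h4b : ContinuousLinearMap.id A Γ4 = Δ4.comp g4 + p4)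
    (h4c : Δ4.comp p4 = 0) :
    p2.comp D1 = 0 ∧ p3.comp D2 = 0 ∧ p4.comp D3 = 0 := by
  refine ⟨?_, ?_, ?_⟩
  · exact parametrix_aux D1 D1s D2 D2s hD1 hD2 Δ2 hΔ2 g2 p2 h2b h2c
  · exact parametrix_aux D2 D2s D3 D3s hD2 hD3 Δ3 hΔ3 g3 p3 h3b h3c
  · exact parametrix_aux D3 D3s D4 D4s hD3 hD4 Δ4 hΔ4 g4 p4 h4b h4c
end

section
/- Let U, V, W be Hilbert A-modules and σ : U → V, σ' : V → W adjointable maps such that the sequence U →^{σ} V →^{σ'} W is exact (Rng σ = Ker σ') and the image of σ' is closed in W. Then Σ = σ ∘ σ* + σ'* ∘ σ' : V → V is bijective, i.e. a Hilbert A-module automorphism of V. -/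
namespace PHM

variable {A : Type*} [CStarAlgebra A] [PartialOrder A] [StarOrderedRing A]
variable {E : Type*} [NormedAddCommGroup E] [Module A E] [PreHilbertModule A E]

local notation "⟪" x ", " y "⟫" => (inner A x y : A)

lemma iadd (x y z : E) : ⟪x + y, z⟫ = ⟪x, z⟫ + ⟪y, z⟫ :=
  PreHilbertModule.inner_add_left x y z

lemma ismul (a : A) (x y : E) : ⟪a • x, y⟫ = a * ⟪x, y⟫ :=
  PreHilbertModule.inner_smul_left a x y

lemma istar (x y : E) : star ⟪x, y⟫ = ⟪y, x⟫ := PreHilbertModule.star_inner x y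

lemma inonneg (x : E) : (0 : A) ≤ ⟪x, x⟫ := PreHilbertModule.inner_self_nonneg x

lemma smul_nonneg' {r : ℝ} (hr : 0 ≤ r) {a : A} (ha : 0 ≤ a) : 0 ≤ r • a := by
  have h : r • a = star ((Real.sqrt r : ℝ) • (1 : A)) * a * ((Real.sqrt r : ℝ) • (1 : A)) := by
    rw [star_smul, star_trivial, star_one, smul_mul_assoc, one_mul, mul_smul_comm, mul_one,
      smul_smul, Real.mul_self_sqrt hr]
  rw [h]
  exact star_left_conjugate_nonneg ha _

lemma smul_le_smul' {r : ℝ} (hr : 0 ≤ r) {a b : A} (hab : a ≤ b) : r • a ≤ r • b := by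
  rw [← sub_nonneg, ← smul_sub]
  exact smul_nonneg' hr (sub_nonneg.2 hab)

lemma smul_le_smul_right' {r s : ℝ} (hrs : r ≤ s) {a : A} (ha : 0 ≤ a) : r • a ≤ s • a := by
  rw [← sub_nonneg, ← sub_smul]
  exact smul_nonneg' (sub_nonneg.2 hrs) ha

lemma izero_left (y : E) : ⟪(0 : E), y⟫ = 0 := by
  have h := iadd (A := A) (0 : E) 0 y
  rw [add_zero] at h
  exact left_eq_add.mp h

lemma izero_right (x : E) : ⟪x, (0 : E)⟫ = 0 := by
  rw [← istar, izero_left, star_zero]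

lemma ineg_left (x y : E) : ⟪-x, y⟫ = -⟪x, y⟫ := by
  have h := iadd (A := A) (-x) x y
  rw [neg_add_cancel, izero_left] at h
  exact eq_neg_of_add_eq_zero_left h.symm

lemma isub_left (x y z : E) : ⟪x - y, z⟫ = ⟪x, z⟫ - ⟪y, z⟫ := by
  rw [sub_eq_add_neg, iadd, ineg_left, ← sub_eq_add_neg]

lemma iadd_right (x y z : E) : ⟪x, y + z⟫ = ⟪x, y⟫ + ⟪x, z⟫ := by
  rw [← istar, iadd, star_add, istar, istar]

lemma isub_right (x y z : E) : ⟪x, y - z⟫ = ⟪x, y⟫ - ⟪x, z⟫ := by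
  rw [← istar, isub_left, star_sub, istar, istar]

lemma ismul_right (a : A) (x y : E) : ⟪x, a • y⟫ = ⟪x, y⟫ * star a := by
  rw [← istar, ismul, star_mul, istar]

lemma isa (x : E) : IsSelfAdjoint (⟪x, x⟫) := istar x x

lemma norm_sq_eq (x : E) : ‖x‖ ^ 2 = ‖⟪x, x⟫‖ := by
  rw [PreHilbertModule.norm_eq (A := A) x, Real.sq_sqrt (norm_nonneg _)]

lemma eq_zero_of_inner_self {x : E} (h : ⟪x, x⟫ = 0) : x = 0 :=
  (PreHilbertModule.inner_self_eq_zero x).mp h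

lemma norm_smul_le' (a : A) (x : E) : ‖a • x‖ ≤ ‖a‖ * ‖x‖ := by
  have h1 : ⟪a • x, a • x⟫ = a * ⟪x, x⟫ * star a := by
    rw [ismul, ismul_right, mul_assoc]
  have h2 : ‖a • x‖ ^ 2 ≤ (‖a‖ * ‖x‖) ^ 2 := by
    rw [norm_sq_eq (A := A), h1]
    calc ‖a * ⟪x, x⟫ * star a‖ ≤ ‖a * ⟪x, x⟫‖ * ‖star a‖ := norm_mul_le _ _
      _ ≤ ‖a‖ * ‖⟪x, x⟫‖ * ‖star a‖ := by gcongr; exact norm_mul_le _ _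
      _ = ‖a‖ * ‖x‖ ^ 2 * ‖a‖ := by rw [norm_star, norm_sq_eq (A := A)]
      _ = (‖a‖ * ‖x‖) ^ 2 := by ring
  exact le_of_pow_le_pow_left₀ two_ne_zero (by positivity) h2

/-- Cauchy–Schwarz for Hilbert `A`-modules: `⟪v,u⟫ ⟪u,v⟫ ≤ ‖u‖² • ⟪v,v⟫`. -/
lemma inner_mul_inner_le (u v : E) : ⟪v, u⟫ * ⟪u, v⟫ ≤ (‖u‖ ^ 2 : ℝ) • ⟪v, v⟫ := by
  rcases eq_or_ne u 0 with rfl | hu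
  · simp only [izero_left, izero_right, mul_zero]
    exact smul_nonneg' (sq_nonneg _) (inonneg v)
  · set M : ℝ := ‖u‖ ^ 2 with hM
    have hM0 : 0 < M := by rw [hM]; exact pow_pos (norm_pos_iff.mpr hu) 2
    set b : A := ⟪v, u⟫ with hb
    have hsb : star b = ⟪u, v⟫ := istar v u
    set c : A := (M⁻¹ : ℝ) • b with hc
    set s : A := (M⁻¹ : ℝ) • (b * star b) with hs
    set Q : A := (M⁻¹ * M⁻¹ : ℝ) • (b * ⟪u, u⟫ * star b) with hQ
    have key : (0 : A) ≤ ⟪v - c • u, v - c • u⟫ := inonneg _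
    have hexp : ⟪v - c • u, v - c • u⟫ = ⟪v, v⟫ - s - s + Q := by
      rw [isub_left, isub_right, isub_right, ismul, ismul_right, ismul_right, ismul]
      rw [hc, star_smul, star_trivial]
      simp only [smul_mul_assoc, mul_smul_comm, smul_smul, hsb, hs, hQ]
      abel
    have hQle : Q ≤ s := by
      have h1 : ⟪u, u⟫ ≤ (M : ℝ) • (1 : A) := by
        have := IsSelfAdjoint.le_algebraMap_norm_self (a := (⟪u, u⟫ : A)) (isa u)
        rwa [Algebra.algebraMap_eq_smul_one, ← norm_sq_eq (A := A)] at this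
      have h2 : b * ⟪u, u⟫ * star b ≤ b * ((M : ℝ) • (1 : A)) * star b :=
        star_right_conjugate_le_conjugate h1 b
      have h3 : b * ((M : ℝ) • (1 : A)) * star b = M • (b * star b) := by
        simp [smul_mul_assoc, mul_smul_comm]
      have h4 : Q ≤ (M⁻¹ * M⁻¹ : ℝ) • (M • (b * star b)) := by
        rw [hQ, ← h3]
        exact smul_le_smul' (by positivity) h2
      rwa [smul_smul, mul_assoc, inv_mul_cancel₀ hM0.ne', mul_one, ← hs] at h4
    have hY : (0 : A) ≤ ⟪v, v⟫ - s := by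
      have h5 : ⟪v, v⟫ - s - s + Q ≤ ⟪v, v⟫ - s := by
        rw [← sub_nonneg,
          show (⟪v, v⟫ - s) - (⟪v, v⟫ - s - s + Q) = s - Q from by abel]
        exact sub_nonneg.2 hQle
      exact le_trans (hexp ▸ key) h5
    have h6 : b * star b ≤ M • ⟪v, v⟫ := by
      have h7 : s ≤ ⟪v, v⟫ := sub_nonneg.mp hY
      have h8 := smul_le_smul' hM0.le h7
      rwa [hs, smul_smul, mul_inv_cancel₀ hM0.ne', one_smul] at h8
    rw [hb, hsb] at h6
    exact h6

section opCS
variable {F : Type*} [NormedAddCommGroup F] [Module A F] [PreHilbertModule A F]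

lemma opCS [Nontrivial A] (T : E →L[A] F) {B K : ℝ} (hTb : ∀ z : E, ‖T z‖ ≤ B * ‖z‖)
    (hK : B ^ 2 ≤ K) {ε : ℝ} (hε : 0 < ε)
    (x : E) : ⟪T x, T x⟫ ≤ K • ⟪x, x⟫ + (K * ε) • (1 : A) := by
  set a : A := ⟪x, x⟫ with ha
  have ha_sa : IsSelfAdjoint a := isa x
  have ha0 : (0 : A) ≤ a := inonneg x
  have hspec : ∀ s ∈ spectrum ℝ a, 0 ≤ s := fun s hs => spectrum_nonneg_of_nonneg ha0 hs
  set f : ℝ → ℝ := fun s => Real.sqrt (s + ε) with hf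
  set g : ℝ → ℝ := fun s => (Real.sqrt (s + ε))⁻¹ with hg
  have hfc : ContinuousOn f (spectrum ℝ a) :=
    (Real.continuous_sqrt.comp (continuous_id.add continuous_const)).continuousOn
  have hfpos : ∀ s ∈ spectrum ℝ a, 0 < f s := fun s hs =>
    Real.sqrt_pos.mpr (by linarith [hspec s hs])
  have hgc : ContinuousOn g (spectrum ℝ a) := hfc.inv₀ (fun s hs => (hfpos s hs).ne')
  set b : A := cfc f a with hb
  set bi : A := cfc g a with hbi
  have hb_sa : IsSelfAdjoint b := cfc_predicate f a
  have hbi_sa : IsSelfAdjoint bi := cfc_predicate g a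
  have hbbi : b * bi = 1 := by
    rw [hb, hbi, ← cfc_mul f g a hfc hgc,
      cfc_congr (g := fun _ => (1 : ℝ)) (fun s hs => mul_inv_cancel₀ (hfpos s hs).ne')]
    exact cfc_one ℝ a
  have hbib : bi * b = 1 := by
    rw [hb, hbi, ← cfc_mul g f a hgc hfc,
      cfc_congr (g := fun _ => (1 : ℝ)) (fun s hs => inv_mul_cancel₀ (hfpos s hs).ne')]
    exact cfc_one ℝ a
  have hbb : b * b = a + (ε : ℝ) • (1 : A) := by
    rw [hb, ← cfc_mul f f a hfc hfc,
      cfc_congr (g := fun s => s + ε)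
        (fun s hs => Real.mul_self_sqrt (by linarith [hspec s hs]))]
    rw [cfc_add (a := a) (f := fun s : ℝ => s) (g := fun _ : ℝ => ε), cfc_id' ℝ a, cfc_const ε a,
      Algebra.algebraMap_eq_smul_one]
  have hone : a ≤ a + (ε : ℝ) • (1 : A) :=
    le_add_of_nonneg_right (smul_nonneg' hε.le zero_le_one)
  have hc1 : bi * a * bi ≤ 1 := by
    calc bi * a * bi ≤ bi * (a + (ε : ℝ) • (1 : A)) * bi :=
          IsSelfAdjoint.conjugate_le_conjugate hone hbi_sa
      _ = (bi * b) * (b * bi) := by rw [← hbb]; noncomm_ring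
      _ = 1 := by rw [hbib, hbbi, one_mul]
  set xe : E := bi • x with hxe
  have hxei : ⟪xe, xe⟫ = bi * a * bi := by
    rw [hxe, ismul, ismul_right, hbi_sa.star_eq, ← ha, mul_assoc]
  have hxen : ‖xe‖ ^ 2 ≤ 1 := by
    have h0 : (0 : A) ≤ bi * a * bi := by
      have := star_left_conjugate_nonneg ha0 bi
      rwa [hbi_sa.star_eq] at this
    calc ‖xe‖ ^ 2 = ‖(⟪xe, xe⟫ : A)‖ := norm_sq_eq (A := A) xe
      _ ≤ ‖(1 : A)‖ := by
          rw [hxei]; exact CStarAlgebra.norm_le_norm_of_nonneg_of_le h0 hc1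
      _ = 1 := norm_one
  set q : A := ⟪T x, T x⟫ with hq
  have hq_sa : IsSelfAdjoint q := isa _
  have hTxe : ⟪T xe, T xe⟫ = bi * q * bi := by
    rw [hxe, map_smul, ismul, ismul_right, hbi_sa.star_eq, hq, mul_assoc]
  have hp_sa : IsSelfAdjoint (bi * q * bi) := by
    rw [IsSelfAdjoint]
    simp only [star_mul, hbi_sa.star_eq, hq_sa.star_eq, mul_assoc]
  have hple : bi * q * bi ≤ (K : ℝ) • (1 : A) := by
    have h3 : ‖bi * q * bi‖ ≤ K := by
      rw [← hTxe, ← norm_sq_eq (A := A)]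
      have h4 := hTb xe
      have h6 : (0 : ℝ) ≤ ‖xe‖ := norm_nonneg _
      nlinarith [norm_nonneg (T xe), sq_nonneg B]
    calc bi * q * bi ≤ algebraMap ℝ A ‖bi * q * bi‖ :=
          IsSelfAdjoint.le_algebraMap_norm_self hp_sa
      _ ≤ (K : ℝ) • (1 : A) := by
          rw [Algebra.algebraMap_eq_smul_one]
          exact smul_le_smul_right' h3 zero_le_one
  have h4 : q = b * (bi * q * bi) * b := by
    rw [show b * (bi * q * bi) * b = (b * bi) * q * (bi * b) from by noncomm_ring,
      hbbi, hbib, one_mul, mul_one]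
  calc q = b * (bi * q * bi) * b := h4
    _ ≤ b * ((K : ℝ) • (1 : A)) * b := IsSelfAdjoint.conjugate_le_conjugate hple hb_sa
    _ = K • (b * b) := by rw [mul_smul_comm, mul_one, smul_mul_assoc]
    _ = K • a + (K * ε) • (1 : A) := by rw [hbb, smul_add, smul_smul]

end opCS

section master
variable {F : Type*} [NormedAddCommGroup F] [Module A F] [PreHilbertModule A F]

set_option maxHeartbeats 1000000 in
lemma master [Nontrivial A] [CompleteSpace E] [CompleteSpace F]
    (T : E →L[A] F) (Ts : F →L[A] E)
    (hT : ∀ (x : E) (y : F), ⟪T x, y⟫ = ⟪x, Ts y⟫)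
    (hcl : IsClosed ((LinearMap.range (T : E →ₗ[A] F) : Submodule A F) : Set F))
    (d : F) (hd : d ∈ LinearMap.range (T : E →ₗ[A] F)) :
    ∃ y ∈ LinearMap.range (T : E →ₗ[A] F), T (Ts y) = d := by
  classical
  -- complex scalar structure on E and F
  letI : Module ℂ E := Module.compHom E (algebraMap ℂ A)
  letI : Module ℂ F := Module.compHom F (algebraMap ℂ A)
  haveI : IsScalarTower ℂ A E := ⟨fun z r m => by
    show (z • r) • m = (algebraMap ℂ A z) • (r • m)
    rw [Algebra.smul_def, mul_smul]⟩
  haveI : IsScalarTower ℂ A F := ⟨fun z r m => by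
    show (z • r) • m = (algebraMap ℂ A z) • (r • m)
    rw [Algebra.smul_def, mul_smul]⟩
  letI : NormedSpace ℂ E := ⟨fun z m => by
    show ‖(algebraMap ℂ A z) • m‖ ≤ ‖z‖ * ‖m‖
    calc ‖(algebraMap ℂ A z) • m‖ ≤ ‖algebraMap ℂ A z‖ * ‖m‖ := norm_smul_le' _ _
      _ = ‖z‖ * ‖m‖ := by rw [norm_algebraMap']⟩
  letI : NormedSpace ℂ F := ⟨fun z m => by
    show ‖(algebraMap ℂ A z) • m‖ ≤ ‖z‖ * ‖m‖
    calc ‖(algebraMap ℂ A z) • m‖ ≤ ‖algebraMap ℂ A z‖ * ‖m‖ := norm_smul_le' _ _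
      _ = ‖z‖ * ‖m‖ := by rw [norm_algebraMap']⟩
  set p : Submodule A F := LinearMap.range (T : E →ₗ[A] F) with hp
  -- a global bound for `T`
  obtain ⟨B, hB0, hBle⟩ : ∃ B : ℝ, 0 < B ∧ ∀ z : E, ‖T z‖ ≤ B * ‖z‖ := by
    let Tc : E →L[ℂ] F :=
      { toLinearMap :=
          { toFun := T
            map_add' := fun x y => map_add T x y
            map_smul' := fun z m => by
              show T ((algebraMap ℂ A z) • m) = (algebraMap ℂ A z) • T m
              exact map_smul T _ m }
        cont := T.continuous }
    obtain ⟨B, hB0, h⟩ := Tc.bound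
    exact ⟨B, hB0, h⟩
  -- open mapping constant
  let qS : Submodule ℂ F := p.restrictScalars ℂ
  haveI : CompleteSpace qS := IsClosed.completeSpace_coe (s := (qS : Set F)) (hs := hcl)
  obtain ⟨C, hC0, hget⟩ : ∃ C : ℝ, 0 < C ∧ ∀ w ∈ p, ∃ x : E, T x = w ∧ ‖x‖ ≤ C * ‖w‖ := by
    let g0 : E →ₗ[ℂ] qS :=
      { toFun := fun x => ⟨T x, LinearMap.mem_range_self (T : E →ₗ[A] F) x⟩
        map_add' := fun x y => Subtype.ext (map_add T x y)
        map_smul' := fun z m => Subtype.ext (by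
          show T ((algebraMap ℂ A z) • m) = (algebraMap ℂ A z) • T m
          exact map_smul T _ m) }
    let g : E →L[ℂ] qS := g0.mkContinuous B (fun x => by
      show ‖T x‖ ≤ B * ‖x‖
      exact hBle x)
    have hgs : Function.Surjective g := by
      rintro ⟨w, hw⟩
      obtain ⟨x, hx⟩ := hw
      exact ⟨x, Subtype.ext hx⟩
    obtain ⟨C, hC0, hC⟩ := g.exists_preimage_norm_le hgs
    refine ⟨C, hC0, fun w hw => ?_⟩
    obtain ⟨x, hx1, hx2⟩ := hC ⟨w, hw⟩
    exact ⟨x, congrArg Subtype.val hx1, hx2⟩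
  -- constants
  set K : ℝ := B ^ 2 + 1 with hK
  have hKpos : 0 < K := by positivity
  have hKB : B ^ 2 ≤ K := by linarith
  set t : ℝ := min (1 / K) (C ^ 2 / 4) with ht
  have ht0 : 0 < t := lt_min (by positivity) (by positivity)
  have htK : t * K ≤ 1 := by
    have h1 : t ≤ 1 / K := min_le_left _ _
    calc t * K ≤ (1 / K) * K := mul_le_mul_of_nonneg_right h1 hKpos.le
      _ = 1 := one_div_mul_cancel hKpos.ne'
  have htC : t ≤ C ^ 2 / 4 := min_le_right _ _
  set lam : ℝ := t / C ^ 2 with hlam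
  have hC2 : (0:ℝ) < C ^ 2 := by positivity
  have hlam0 : 0 < lam := div_pos ht0 hC2
  have hlam4 : lam ≤ 1 / 4 := by
    rw [hlam, div_le_div_iff₀ hC2 (by norm_num)]
    linarith [htC]
  set θ : ℝ := Real.sqrt (1 - lam / 2) with hθ
  have hθ0 : 0 ≤ θ := Real.sqrt_nonneg _
  have hθ1 : θ < 1 := by
    rw [hθ]
    calc Real.sqrt (1 - lam / 2) < Real.sqrt 1 :=
          Real.sqrt_lt_sqrt (by linarith) (by linarith)
      _ = 1 := Real.sqrt_one
  set c : A := algebraMap ℝ A t with hc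
  have hc_star : star c = c := by
    rw [hc, Algebra.algebraMap_eq_smul_one, star_smul, star_trivial, star_one]
  -- the contraction estimate
  have hcontr : ∀ w ∈ p, ‖w - c • T (Ts w)‖ ≤ θ * ‖w‖ := by
    intro w hw
    rcases eq_or_ne w 0 with rfl | hw0
    · simp only [map_zero, smul_zero, sub_zero, norm_zero, mul_zero, le_refl]
    · set aa : A := ⟪w, w⟫ with haa
      have haa_sa : IsSelfAdjoint aa := isa w
      have haa0 : (0:A) ≤ aa := inonneg w
      set M : ℝ := ‖aa‖ with hM
      have hMw : M = ‖w‖ ^ 2 := (norm_sq_eq (A := A) w).symm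
      have hM0 : 0 < M := by
        rw [hMw]
        exact pow_pos (norm_pos_iff.mpr hw0) 2
      set bb : A := ⟪Ts w, Ts w⟫ with hbb
      have hbb0 : (0:A) ≤ bb := inonneg _
      have hbb_sa : IsSelfAdjoint bb := isa _
      have hSw : ⟪T (Ts w), w⟫ = bb := hT (Ts w) w
      have hwS : ⟪w, T (Ts w)⟫ = bb := by
        rw [← istar, hSw, hbb_sa.star_eq]
      set cc : A := ⟪T (Ts w), T (Ts w)⟫ with hcc
      set ε : ℝ := lam * M / (2 * t ^ 2 * K) with hEps
      have hε0 : 0 < ε := by positivity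
      have hccle : cc ≤ K • bb + (K * ε) • (1:A) := opCS T hBle hKB hε0 (Ts w)
      obtain ⟨x, hx, hxn⟩ := hget w hw
      have haTs : aa = ⟪x, Ts w⟫ := by rw [haa, ← hT x w, hx]
      have haa2 : aa * aa ≤ (‖x‖ ^ 2 : ℝ) • bb := by
        have h := inner_mul_inner_le (A := A) x (Ts w)
        have h2 : ⟪Ts w, x⟫ = aa := by
          rw [← istar (A := A) x (Ts w), ← haTs, haa_sa.star_eq]
        rwa [h2, ← haTs] at h
      have hx2 : ‖x‖ ^ 2 ≤ C ^ 2 * M := by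
        rw [hMw]
        nlinarith [norm_nonneg x, norm_nonneg w, hxn, hC0]
      have haa2' : aa * aa ≤ (C ^ 2 * M : ℝ) • bb :=
        le_trans haa2 (smul_le_smul_right' hx2 hbb0)
      set e : A := ⟪w - c • T (Ts w), w - c • T (Ts w)⟫ with he
      have h1 : ⟪w, c • T (Ts w)⟫ = t • bb := by
        rw [ismul_right, hc_star, hwS, hc, ← Algebra.commutes, ← Algebra.smul_def]
      have h2 : ⟪c • T (Ts w), w⟫ = t • bb := by
        rw [ismul, hSw, hc, ← Algebra.smul_def]
      have h3 : ⟪c • T (Ts w), c • T (Ts w)⟫ = (t * t) • cc := by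
        rw [ismul, ismul_right, hc_star, ← hcc, hc, ← Algebra.commutes t cc, ← mul_assoc,
          ← map_mul, ← Algebra.smul_def]
      have hexp : e = aa - t • bb - t • bb + (t * t) • cc := by
        rw [he, isub_left, isub_right, isub_right, h1, h2, h3, ← haa]
        abel
      set μ : ℝ := t / (C ^ 2 * M) with hμ
      have hμ0 : 0 ≤ μ := by positivity
      have hμM : μ * M = lam := by
        rw [hμ, hlam]
        field_simp
      have hb2 : μ • (aa * aa) ≤ t • bb := by
        have h4 := smul_le_smul' hμ0 haa2'
        rwa [smul_smul, hμ, div_mul_cancel₀ t (by positivity : (C ^ 2 * M : ℝ) ≠ 0)] at h4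
      have hb1 : e ≤ aa - μ • (aa * aa) + (lam * M / 2) • (1:A) := by
        have h5 : (t * t) • cc ≤ (t * t) • (K • bb + (K * ε) • (1:A)) :=
          smul_le_smul' (by positivity) hccle
        have h6 : (t * t) • (K • bb + (K * ε) • (1:A))
            = (t * t * K) • bb + (lam * M / 2) • (1:A) := by
          rw [smul_add, smul_smul, smul_smul]
          congr 2
          rw [hEps]
          field_simp
        have h7 : (t * t * K) • bb ≤ t • bb := by
          apply smul_le_smul_right' _ hbb0
          nlinarith [ht0.le, htK]
        have h8 : e ≤ aa - t • bb - t • bb + (t • bb + (lam * M / 2) • (1:A)) := by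
          rw [hexp]
          have := le_trans h5 (le_of_eq h6)
          have h9 : (t * t) • cc ≤ t • bb + (lam * M / 2) • (1:A) :=
            le_trans this (add_le_add_left h7 _)
          exact add_le_add_right h9 _
        calc e ≤ aa - t • bb - t • bb + (t • bb + (lam * M / 2) • (1:A)) := h8
          _ = aa - t • bb + (lam * M / 2) • (1:A) := by abel
          _ ≤ aa - μ • (aa * aa) + (lam * M / 2) • (1:A) := by
              exact add_le_add_left (sub_le_sub_left hb2 aa) _
      have hspec0 : ∀ s ∈ spectrum ℝ aa, 0 ≤ s := fun s hs =>
        spectrum_nonneg_of_nonneg haa0 hs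
      have hspecM : ∀ s ∈ spectrum ℝ aa, s ≤ M := fun s hs =>
        le_trans (le_abs_self s) (spectrum.norm_le_norm_of_mem hs)
      have hcfc : aa - μ • (aa * aa) ≤ (M * (1 - lam)) • (1:A) := by
        rw [← sub_nonneg]
        have hpos : ∀ s ∈ spectrum ℝ aa, 0 ≤ M * (1 - lam) - s + μ * s ^ 2 := by
          intro s hs
          have hs0 := hspec0 s hs
          have hsM := hspecM s hs
          have h2f : 0 ≤ 1 - μ * (M + s) := by nlinarith [hμM, hlam4, hμ0]
          have hkey : 0 ≤ (M - s) * (1 - μ * (M + s)) :=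
            mul_nonneg (by linarith) h2f
          nlinarith [hkey, hμM]
        have h := cfc_nonneg hpos
        have heq : cfc (fun s : ℝ => M * (1 - lam) - s + μ * s ^ 2) aa
            = (M * (1 - lam)) • (1:A) - aa + μ • (aa * aa) := by
          rw [cfc_add (a := aa) (f := fun s : ℝ => M * (1 - lam) - s) (g := fun s : ℝ => μ * s ^ 2),
            cfc_sub (a := aa) (f := fun _ : ℝ => M * (1 - lam)) (g := fun s : ℝ => s),
            cfc_const (M * (1 - lam)) aa, cfc_id' ℝ aa]
          have hsm : cfc (fun s : ℝ => μ * s ^ 2) aa = μ • (aa * aa) := by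
            rw [show (fun s : ℝ => μ * s ^ 2) = (fun s : ℝ => μ • s ^ 2) from rfl,
              cfc_smul μ (fun s : ℝ => s ^ 2) aa, cfc_pow_id aa 2, pow_two]
          rw [hsm, Algebra.algebraMap_eq_smul_one]
        rw [heq] at h
        calc (0:A) ≤ (M * (1 - lam)) • (1:A) - aa + μ • (aa * aa) := h
          _ = (M * (1 - lam)) • (1:A) - (aa - μ • (aa * aa)) := by abel
      have hfin : e ≤ (M * (1 - lam / 2)) • (1:A) := by
        calc e ≤ aa - μ • (aa * aa) + (lam * M / 2) • (1:A) := hb1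
          _ ≤ (M * (1 - lam)) • (1:A) + (lam * M / 2) • (1:A) := add_le_add_left hcfc _
          _ = (M * (1 - lam / 2)) • (1:A) := by rw [← add_smul]; ring_nf
      have he0 : (0:A) ≤ e := inonneg _
      have hlam2 : (0:ℝ) ≤ 1 - lam / 2 := by linarith
      have hne : ‖e‖ ≤ M * (1 - lam / 2) := by
        calc ‖e‖ ≤ ‖(M * (1 - lam / 2)) • (1:A)‖ :=
              CStarAlgebra.norm_le_norm_of_nonneg_of_le he0 hfin
          _ = (M * (1 - lam / 2)) * ‖(1:A)‖ := by
              rw [norm_smul, Real.norm_of_nonneg (by nlinarith)]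
          _ = M * (1 - lam / 2) := by rw [norm_one, mul_one]
      have hsq : ‖w - c • T (Ts w)‖ ^ 2 ≤ (θ * ‖w‖) ^ 2 := by
        rw [norm_sq_eq (A := A), ← he]
        calc ‖e‖ ≤ M * (1 - lam / 2) := hne
          _ = (θ * ‖w‖) ^ 2 := by
              rw [hθ, mul_pow, Real.sq_sqrt hlam2, hMw]
              ring
      exact le_of_pow_le_pow_left₀ two_ne_zero (by positivity) hsq
  -- iteration
  set SS : F →L[A] F := T.comp Ts with hSS
  set Φ : F → F := fun w => w - c • SS w with hΦ
  set seq : ℕ → F := fun n => Φ^[n] d with hseqdef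
  have hseq_succ : ∀ n, seq (n + 1) = seq n - c • SS (seq n) := fun n => by
    rw [hseqdef]
    simp only [Function.iterate_succ_apply']
    rfl
  have hmem : ∀ n, seq n ∈ p := by
    intro n
    induction n with
    | zero => exact hd
    | succ n ih =>
        rw [hseq_succ]
        exact Submodule.sub_mem p ih
          (Submodule.smul_mem p c (LinearMap.mem_range_self (T : E →ₗ[A] F) (Ts (seq n))))
  have hnorm : ∀ n, ‖seq n‖ ≤ θ ^ n * ‖d‖ := by
    intro n
    induction n with
    | zero => rw [hseqdef]; simp
    | succ n ih =>
        have h1 : ‖seq (n + 1)‖ ≤ θ * ‖seq n‖ := by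
          rw [hseq_succ]
          exact hcontr (seq n) (hmem n)
        calc ‖seq (n + 1)‖ ≤ θ * ‖seq n‖ := h1
          _ ≤ θ * (θ ^ n * ‖d‖) := mul_le_mul_of_nonneg_left ih hθ0
          _ = θ ^ (n + 1) * ‖d‖ := by ring
  set xpart : ℕ → F := fun N => ∑ i ∈ Finset.range N, c • seq i with hxpart
  have hxmem : ∀ N, xpart N ∈ p := fun N =>
    Submodule.sum_mem p (fun i _ => Submodule.smul_mem p c (hmem i))
  have hTx : ∀ N, SS (xpart N) = d - seq N := by
    intro N
    rw [hxpart]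
    rw [map_sum]
    have h1 : ∀ i, SS (c • seq i) = seq i - seq (i + 1) := by
      intro i
      rw [map_smul, hseq_succ i]
      abel
    rw [Finset.sum_congr rfl (fun i _ => h1 i), Finset.sum_range_sub' seq N]
    rfl
  have hcauchy : CauchySeq xpart := by
    apply cauchySeq_of_le_geometric θ (‖c‖ * ‖d‖) hθ1
    intro n
    rw [dist_eq_norm]
    have h1 : xpart n - xpart (n + 1) = -(c • seq n) := by
      simp only [hxpart, Finset.sum_range_succ]
      abel
    rw [h1, norm_neg]
    calc ‖c • seq n‖ ≤ ‖c‖ * ‖seq n‖ := norm_smul_le' c (seq n)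
      _ ≤ ‖c‖ * (θ ^ n * ‖d‖) := mul_le_mul_of_nonneg_left (hnorm n) (norm_nonneg c)
      _ = ‖c‖ * ‖d‖ * θ ^ n := by ring
  obtain ⟨y, hytend⟩ := cauchySeq_tendsto_of_complete hcauchy
  have hymem : y ∈ p := hcl.mem_of_tendsto hytend (Filter.Eventually.of_forall hxmem)
  have hseq0 : Filter.Tendsto seq Filter.atTop (nhds 0) := by
    apply squeeze_zero_norm hnorm
    have h2 := (tendsto_pow_atTop_nhds_zero_of_lt_one hθ0 hθ1).mul_const ‖d‖
    simpa using h2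
  have hSy : SS y = d := by
    have h1 : Filter.Tendsto (fun N => SS (xpart N)) Filter.atTop (nhds (SS y)) :=
      ((SS.continuous.tendsto y).comp hytend)
    have h2 : Filter.Tendsto (fun N => d - seq N) Filter.atTop (nhds d) := by
      have := Filter.Tendsto.sub (tendsto_const_nhds (x := d)) hseq0
      simpa using this
    rw [show (fun N => SS (xpart N)) = fun N => d - seq N from funext hTx] at h1
    exact tendsto_nhds_unique h1 h2
  exact ⟨y, hymem, hSy⟩

end master

end PHM


/-- Lemma 9: let `U, V, W` be Hilbert `A`-modules (complete pre-Hilbert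
`A`-modules) and `σ : U → V`, `σ' : V → W` adjointable maps with `Rng σ = Ker σ'` and
`Rng σ'` closed. Then `Σ = σ ∘ σ* + σ'* ∘ σ'` is a Hilbert `A`-module automorphism of `V`,
i.e. bijective. -/
theorem laplacian_of_exact_sequence_bijective
    {A : Type*} [CStarAlgebra A] [PartialOrder A] [StarOrderedRing A]
    {U V W : Type*}
    [NormedAddCommGroup U] [Module A U] [PreHilbertModule A U] [CompleteSpace U]
    [NormedAddCommGroup V] [Module A V] [PreHilbertModule A V] [CompleteSpace V]
    [NormedAddCommGroup W] [Module A W] [PreHilbertModule A W] [CompleteSpace W]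
    (σ : U →L[A] V) (σs : V →L[A] U) (σ' : V →L[A] W) (σ's : W →L[A] V)
    (hσ : ∀ (u : U) (v : V), (inner A (σ u) v : A) = inner A u (σs v))
    (hσ' : ∀ (v : V) (w : W), (inner A (σ' v) w : A) = inner A v (σ's w))
    (hexact : LinearMap.range (σ : U →ₗ[A] V) = LinearMap.ker (σ' : V →ₗ[A] W))
    (hclosed : IsClosed (LinearMap.range (σ' : V →ₗ[A] W) : Set W)) :
    Function.Bijective (σ.comp σs + σ's.comp σ') := by
  classical
  by_cases htriv : (0 : A) = 1
  · haveI : Subsingleton V := ⟨fun x y => by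
      have hx : x = 0 := by rw [← one_smul A x, ← htriv, zero_smul]
      have hy : y = 0 := by rw [← one_smul A y, ← htriv, zero_smul]
      rw [hx, hy]⟩
    exact ⟨fun a b _ => Subsingleton.elim a b, fun v => ⟨0, Subsingleton.elim _ _⟩⟩
  haveI : Nontrivial A := ⟨⟨0, 1, htriv⟩⟩
  have happly : ∀ v : V, (σ.comp σs + σ's.comp σ') v = σ (σs v) + σ's (σ' v) := fun v => rfl
  constructor
  · -- injectivity
    intro v₁ v₂ h12
    have hsub : σ (σs (v₁ - v₂)) + σ's (σ' (v₁ - v₂)) = 0 := by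
      rw [← happly, map_sub, h12, sub_self]
    set v : V := v₁ - v₂ with hv
    have hinner : (inner A (σ (σs v)) v : A) + inner A (σ's (σ' v)) v = 0 := by
      rw [← PHM.iadd, hsub, PHM.izero_left]
    have h1 : (inner A (σ (σs v)) v : A) = inner A (σs v) (σs v) := hσ (σs v) v
    have h2 : (inner A (σ's (σ' v)) v : A) = inner A (σ' v) (σ' v) := by
      calc (inner A (σ's (σ' v)) v : A) = star (inner A v (σ's (σ' v)) : A) :=
            (PHM.istar (A := A) v (σ's (σ' v))).symm
        _ = star (inner A (σ' v) (σ' v) : A) := by rw [← hσ' v (σ' v)]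
        _ = inner A (σ' v) (σ' v) := (PHM.isa (A := A) (σ' v)).star_eq
    rw [h1, h2] at hinner
    have ha := PHM.inonneg (A := A) (σs v)
    have hb := PHM.inonneg (A := A) (σ' v)
    have hz1 : (inner A (σs v) (σs v) : A) = 0 := by
      have hle : (inner A (σs v) (σs v) : A) ≤ 0 := by
        rw [← hinner]
        exact le_add_of_nonneg_right hb
      exact le_antisymm hle ha
    have hz2 : (inner A (σ' v) (σ' v) : A) = 0 := by
      have hle : (inner A (σ' v) (σ' v) : A) ≤ 0 := by
        rw [← hinner]
        exact le_add_of_nonneg_left ha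
      exact le_antisymm hle hb
    have hσsv : σs v = 0 := PHM.eq_zero_of_inner_self hz1
    have hσ'v : σ' v = 0 := PHM.eq_zero_of_inner_self hz2
    have hvk : v ∈ LinearMap.ker (σ' : V →ₗ[A] W) := LinearMap.mem_ker.mpr hσ'v
    rw [← hexact] at hvk
    obtain ⟨u, hu⟩ := hvk
    rw [ContinuousLinearMap.coe_coe] at hu
    have hvv : (inner A v v : A) = 0 := by
      nth_rewrite 1 [← hu]
      rw [hσ u v, hσsv, PHM.izero_right]
    have hv0 : v = 0 := PHM.eq_zero_of_inner_self hvv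
    exact sub_eq_zero.mp hv0
  · -- surjectivity
    intro v
    obtain ⟨w, hwmem, hw⟩ :=
      PHM.master σ' σ's hσ' hclosed (σ' v) (LinearMap.mem_range_self (σ' : V →ₗ[A] W) v)
    obtain ⟨z₀, hz₀⟩ := hwmem
    rw [ContinuousLinearMap.coe_coe] at hz₀
    set n : V := v - (σ (σs z₀) + σ's (σ' z₀)) with hn
    have hrangeker : ∀ u : U, σ' (σ u) = 0 := fun u => by
      have hmem : σ u ∈ LinearMap.ker (σ' : V →ₗ[A] W) := hexact ▸ LinearMap.mem_range_self (σ : U →ₗ[A] V) u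
      exact LinearMap.mem_ker.mp hmem
    have hσ'z : σ' (σ's (σ' z₀)) = σ' v := by rw [hz₀, hw]
    have hσ'n : σ' n = 0 := by
      rw [hn, map_sub, map_add, hrangeker (σs z₀), hσ'z, zero_add, sub_self]
    have hkclosed : IsClosed ((LinearMap.range (σ : U →ₗ[A] V) : Submodule A V) : Set V) := by
      rw [hexact]
      have hset : ((LinearMap.ker (σ' : V →ₗ[A] W) : Submodule A V) : Set V) = {x : V | σ' x = (0 : W)} := rfl
      rw [hset]
      exact isClosed_eq σ'.continuous continuous_const
    have hnmem : n ∈ LinearMap.range (σ : U →ₗ[A] V) := by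
      rw [hexact]
      exact LinearMap.mem_ker.mpr hσ'n
    obtain ⟨y, hymem, hy⟩ := PHM.master σ σs hσ hkclosed n hnmem
    have hσ'y : σ' y = 0 := by
      rw [hexact] at hymem
      exact LinearMap.mem_ker.mp hymem
    refine ⟨z₀ + y, ?_⟩
    rw [happly, map_add, map_add, map_add, map_add, hσ'y, map_zero, add_zero, hy, hn]
    abel
end

section
/- Let U, V, W be Hilbert A-modules and σ : U → V, σ' : V → W adjointable maps such that the sequence U →^{σ} V →^{σ'} W is exact (Rng σ = Ker σ') and the image of σ' is closed in W. Then for all nonzero complex scalars λ, μ ∈ ℂ \ {0}, the map λ · σ ∘ σ* + μ · σ'* ∘ σ' : V → V is bijective, i.e. a continuous A-linear automorphism of V. -/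
namespace PHMaux

variable {A : Type*} [CStarAlgebra A] [PartialOrder A] [StarOrderedRing A]
variable {X : Type*} [NormedAddCommGroup X] [Module A X] [PreHilbertModule A X]

lemma p_inner_add_left (x y z : X) :
    (inner A (x + y) z : A) = inner A x z + inner A y z := PreHilbertModule.inner_add_left x y z

lemma p_inner_smul_left (a : A) (x y : X) :
    (inner A (a • x) y : A) = a * inner A x y := PreHilbertModule.inner_smul_left a x y

lemma p_star_inner (x y : X) : star (inner A x y : A) = inner A y x := PreHilbertModule.star_inner x y

lemma p_inner_add_right (x y z : X) : (inner A x (y + z) : A) = inner A x y + inner A x z := by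
  rw [← p_star_inner, p_inner_add_left, star_add, p_star_inner, p_star_inner]

lemma p_inner_zero_left (y : X) : (inner A (0:X) y : A) = 0 := by
  have h := p_inner_add_left (A := A) (0:X) 0 y
  simp only [add_zero] at h
  exact left_eq_add.mp h

lemma p_inner_zero_right (y : X) : (inner A y (0:X) : A) = 0 := by
  rw [← p_star_inner, p_inner_zero_left, star_zero]

lemma p_inner_neg_left (x y : X) : (inner A (-x) y : A) = -inner A x y := by
  have h := p_inner_add_left (A := A) x (-x) y
  rw [add_neg_cancel, p_inner_zero_left] at h
  exact eq_neg_of_add_eq_zero_right h.symm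

lemma p_inner_sub_left (x y z : X) : (inner A (x - y) z : A) = inner A x z - inner A y z := by
  rw [sub_eq_add_neg, p_inner_add_left, p_inner_neg_left, sub_eq_add_neg]

lemma p_inner_sub_right (x y z : X) : (inner A x (y - z) : A) = inner A x y - inner A x z := by
  rw [← p_star_inner, p_inner_sub_left, star_sub, p_star_inner, p_star_inner]

lemma p_inner_self_sa (x : X) : IsSelfAdjoint (inner A x x : A) := p_star_inner x x

lemma p_norm_inner_self (x : X) : ‖(inner A x x : A)‖ = ‖x‖ ^ 2 := by
  rw [PreHilbertModule.norm_eq (A := A) x, Real.sq_sqrt (norm_nonneg _)]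

lemma p_inner_smul_right (a : A) (x y : X) : (inner A x (a • y) : A) = inner A x y * star a := by
  rw [← p_star_inner, p_inner_smul_left, star_mul, p_star_inner]

lemma p_norm_smul_le (a : A) (x : X) : ‖a • x‖ ≤ ‖a‖ * ‖x‖ := by
  have h : (inner A (a • x) (a • x) : A) = a * inner A x x * star a := by
    rw [p_inner_smul_left, p_inner_smul_right, mul_assoc]
  have h2 : ‖(inner A (a • x) (a • x) : A)‖ ≤ ‖a‖ ^ 2 * ‖(inner A x x : A)‖ := by
    rw [h]
    calc ‖a * (inner A x x : A) * star a‖ ≤ ‖a * (inner A x x : A)‖ * ‖star a‖ := norm_mul_le _ _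
      _ ≤ ‖a‖ * ‖(inner A x x : A)‖ * ‖a‖ := by
          rw [norm_star]; gcongr; exact norm_mul_le _ _
      _ = ‖a‖ ^ 2 * ‖(inner A x x : A)‖ := by ring
  have h3 : ‖a • x‖ ^ 2 ≤ (‖a‖ * ‖x‖) ^ 2 := by
    rw [← p_norm_inner_self (A := A) (a • x)]
    calc ‖(inner A (a • x) (a • x) : A)‖ ≤ ‖a‖ ^ 2 * ‖(inner A x x : A)‖ := h2
      _ = (‖a‖ * ‖x‖) ^ 2 := by rw [p_norm_inner_self]; ring
  nlinarith [norm_nonneg (a • x), mul_nonneg (norm_nonneg a) (norm_nonneg x)]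

lemma p_expand (b : A) (x y : X) : (inner A (b • x - y) (b • x - y) : A)
    = b * inner A x x * star b - b * inner A x y - inner A y x * star b + inner A y y := by
  rw [p_inner_sub_left, p_inner_sub_right, p_inner_sub_right, p_inner_smul_left,
    p_inner_smul_right, p_inner_smul_right, p_inner_smul_left]
  noncomm_ring

lemma p_cauchy_schwarz (x y : X) : ‖(inner A x y : A)‖ ≤ ‖x‖ * ‖y‖ := by
  by_cases hx : x = 0
  · subst hx; rw [p_inner_zero_left]; simp [mul_nonneg, norm_nonneg]
  set d : A := inner A x y with hd
  set c : A := star d * d with hc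
  set r : ℝ := ‖x‖ ^ 2 with hr
  have hrpos : 0 < r := by
    have h0 : (inner A x x : A) ≠ 0 := fun h => hx ((PreHilbertModule.inner_self_eq_zero x).mp h)
    have h1 : 0 < ‖(inner A x x : A)‖ := norm_pos_iff.mpr h0
    rwa [p_norm_inner_self] at h1
  set b : A := (1/r) • star d with hb
  have hsb : star b = (1/r) • d := by rw [hb, star_smul, star_star, star_trivial]
  have key : (0:A) ≤ b * inner A x x * star b - b * d - star d * star b + inner A y y := by
    have := PreHilbertModule.inner_self_nonneg (A := A) (b • x - y)
    rwa [p_expand, ← hd, ← p_star_inner x y, ← hd] at this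
  have hbd : b * d = (1/r) • c := by rw [hb, hc, smul_mul_assoc]
  have hdb : star d * star b = (1/r) • c := by rw [hsb, hc, mul_smul_comm]
  have hconj : b * inner A x x * star b = ((1/r)*(1/r)) • (star d * inner A x x * d) := by
    rw [hb, hsb, smul_mul_assoc, smul_mul_assoc, mul_smul_comm, smul_smul]
  have hcs : star d * (inner A x x : A) * d ≤ r • c := by
    have h := CStarAlgebra.star_right_conjugate_le_norm_smul (a := star d) (b := (inner A x x : A))
      (p_inner_self_sa x)
    rwa [star_star, p_norm_inner_self, ← hr, ← hc] at h
  have step : ((1/r)*(1/r)) • (star d * (inner A x x : A) * d) ≤ (1/r) • c := by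
    calc ((1/r)*(1/r)) • (star d * (inner A x x : A) * d) ≤ ((1/r)*(1/r)) • (r • c) := by
          exact smul_le_smul_of_nonneg_left hcs (by positivity)
      _ = (1/r) • c := by rw [smul_smul]; congr 1; try field_simp
  have key2 : (1/r) • c ≤ inner A y y := by
    have : (0:A) ≤ (1/r) • c - (1/r) • c - (1/r) • c + inner A y y := by
      calc (0:A) ≤ b * inner A x x * star b - b * d - star d * star b + inner A y y := key
        _ ≤ (1/r) • c - (1/r) • c - (1/r) • c + inner A y y := by
            rw [hbd, hdb, hconj]
            gcongr
    simpa using this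
  have key3 : c ≤ r • (inner A y y : A) := by
    have := smul_le_smul_of_nonneg_left key2 hrpos.le
    rwa [smul_smul, mul_one_div, div_self hrpos.ne', one_smul] at this
  have hnorm : ‖c‖ ≤ r * ‖(inner A y y : A)‖ := by
    have h1 : ‖c‖ ≤ ‖r • (inner A y y : A)‖ :=
      CStarAlgebra.norm_le_norm_of_nonneg_of_le (star_mul_self_nonneg d) key3
    rwa [norm_smul, Real.norm_of_nonneg hrpos.le] at h1
  have hcd : ‖c‖ = ‖d‖ * ‖d‖ := CStarRing.norm_star_mul_self
  rw [hcd, p_norm_inner_self] at hnorm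
  nlinarith [norm_nonneg d, norm_nonneg x, norm_nonneg y, mul_nonneg (norm_nonneg x) (norm_nonneg y)]


lemma resolvent_contra {V : Type*} [NormedAddCommGroup V] [NormedSpace ℂ V] [CompleteSpace V]
    (T : V →L[ℂ] V) (z : ℂ) (hz : z ∈ spectrum ℂ T)
    (happr : ∀ ε : ℝ, 0 < ε → ∃ w : ℂ, w ∉ spectrum ℂ T ∧ ‖w - z‖ < ε)
    (c : ℝ) (hc : 0 < c) (hbdd : ∀ v : V, c * ‖v‖ ≤ ‖T v - z • v‖) : False := by
  obtain ⟨w, hw, hwz⟩ := happr (c/2) (by positivity)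
  have hu : IsUnit (algebraMap ℂ (V →L[ℂ] V) w - T) := by
    rwa [spectrum.notMem_iff] at hw
  obtain ⟨u, huv⟩ := hu
  have hne : z ≠ w := fun h => hw (h ▸ hz)
  have hzw : 0 < ‖z - w‖ := by
    rw [norm_pos_iff]; exact sub_ne_zero.mpr hne
  have hres : (1:ℝ) ≤ ‖z - w‖ * ‖(↑u⁻¹ : V →L[ℂ] V)‖ := by
    by_contra hlt
    push_neg at hlt
    have hnorm : ‖-((z - w) • (↑u⁻¹ : V →L[ℂ] V))‖ < 1 := by
      rw [norm_neg]; exact (norm_smul_le _ _).trans_lt hlt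
    have hunit : IsUnit (algebraMap ℂ (V →L[ℂ] V) z - T) := by
      have hval : algebraMap ℂ (V →L[ℂ] V) z - T
          = ↑u * ↑(Units.oneSub (-((z - w) • (↑u⁻¹ : V →L[ℂ] V))) hnorm) := by
        rw [Units.val_oneSub, sub_neg_eq_add, mul_add, mul_one, mul_smul_comm,
          u.mul_inv, huv]
        rw [Algebra.algebraMap_eq_smul_one, Algebra.algebraMap_eq_smul_one, sub_smul]
        abel
      exact hval ▸ (u * Units.oneSub _ hnorm).isUnit
    exact (spectrum.mem_iff.mp hz) hunit
  have hinv : 2/c < ‖(↑u⁻¹ : V →L[ℂ] V)‖ := by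
    have h2 : ‖z - w‖ < c/2 := by rwa [← norm_neg, neg_sub] at hwz
    have := hres
    rw [← div_le_iff₀' hzw] at this
    calc 2/c < 1/‖z - w‖ := by
          rw [div_lt_div_iff₀ hc hzw]
          nlinarith
      _ ≤ ‖(↑u⁻¹ : V →L[ℂ] V)‖ := by simpa using this
  have hx : ∃ x : V, (2/c) * ‖x‖ < ‖(↑u⁻¹ : V →L[ℂ] V) x‖ := by
    by_contra hxc
    push_neg at hxc
    exact absurd (ContinuousLinearMap.opNorm_le_bound _ (by positivity) hxc) (not_le.mpr hinv)
  obtain ⟨x, hxlt⟩ := hx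
  set y := (↑u⁻¹ : V →L[ℂ] V) x with hy
  have hypos : 0 < ‖y‖ := by
    rcases le_or_gt ‖y‖ 0 with h | h
    · exfalso
      have h1 : 0 ≤ (2/c) * ‖x‖ := mul_nonneg (by positivity) (norm_nonneg x)
      linarith
    · exact h
  have hxy : ‖x‖ < (c/2) * ‖y‖ := by
    rw [div_mul_eq_mul_div, lt_div_iff₀ (by norm_num : (0:ℝ) < 2)]
    calc ‖x‖ * 2 = (2/c) * ‖x‖ * c := by field_simp
      _ < ‖y‖ * c := by nlinarith
      _ = c * ‖y‖ := mul_comm _ _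
  have happly : w • y - T y = x := by
    have h1 : (↑u * ↑u⁻¹ : V →L[ℂ] V) x = x := by rw [u.mul_inv]; rfl
    rw [ContinuousLinearMap.mul_apply] at h1
    rw [← h1, huv]
    simp [Algebra.algebraMap_eq_smul_one, ContinuousLinearMap.sub_apply,
      ContinuousLinearMap.smul_apply]
    rfl
  have hbd := hbdd y
  have : ‖T y - z • y‖ < c * ‖y‖ := by
    have heq : T y - z • y = -x + (w - z) • y := by
      rw [← happly]; rw [sub_smul]; abel
    rw [heq]
    calc ‖-x + (w - z) • y‖ ≤ ‖-x‖ + ‖(w - z) • y‖ := norm_add_le _ _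
      _ = ‖x‖ + ‖w - z‖ * ‖y‖ := by rw [norm_neg, norm_smul]
      _ < (c/2) * ‖y‖ + (c/2) * ‖y‖ := by
          have := hxy
          gcongr
      _ = c * ‖y‖ := by ring
  linarith

lemma isUnit_of_symm_of_bddBelow
    {V : Type*} [NormedAddCommGroup V] [NormedSpace ℂ V] [CompleteSpace V] [Nontrivial V]
    [Module A V] [PreHilbertModule A V] [IsScalarTower ℂ A V]
    (T : V →L[ℂ] V)
    (hsym : ∀ v w : V, (inner A (T v) w : A) = inner A v (T w))
    (c : ℝ) (hc : 0 < c) (hbdd : ∀ v, c * ‖v‖ ≤ ‖T v‖) : IsUnit T := by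
  -- imaginary-part lower bound
  have hsmul : ∀ (a : ℂ) (v : V), a • v = (a • (1:A)) • v := by
    intro a v
    rw [smul_assoc, one_smul]
  have himb : ∀ (z : ℂ) (v : V), |z.im| * ‖v‖ ≤ ‖T v - z • v‖ := by
    intro z v
    by_cases hv : v = 0
    · simp [hv]
    have hvpos : 0 < ‖v‖ := norm_pos_iff.mpr hv
    set h : A := inner A v v with hh
    set s : A := inner A (T v) v with hs
    have hx : (inner A (T v - z • v) v : A) = s - z • h := by
      rw [p_inner_sub_left, hsmul z v, p_inner_smul_left, ← hs, ← hh]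
      rw [smul_mul_assoc, one_mul]
    have hstarx : star (inner A (T v - z • v) v : A) = s - (starRingEnd ℂ z) • h := by
      rw [hx, star_sub, star_smul, Complex.star_def]
      congr 1
      · rw [hs, p_star_inner]; exact (hsym v v).symm
      · congr 1; rw [hh, p_star_inner]
    set x : A := inner A (T v - z • v) v with hxd
    have hsub : x - star x = ((starRingEnd ℂ) z - z) • h := by
      rw [hstarx, hx, sub_smul]; abel
    have hcz : ‖(starRingEnd ℂ) z - z‖ = 2 * |z.im| := by
      rw [norm_sub_rev, Complex.sub_conj]
      rw [norm_mul, Complex.norm_I, mul_one, Complex.norm_real, Real.norm_eq_abs, abs_mul]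
      simp
    have hnorm1 : ‖x - star x‖ = (2 * |z.im|) * ‖h‖ := by
      rw [hsub, norm_smul, hcz]
    have hnorm2 : ‖x - star x‖ ≤ 2 * ‖x‖ := by
      calc ‖x - star x‖ ≤ ‖x‖ + ‖star x‖ := norm_sub_le _ _
        _ = 2 * ‖x‖ := by rw [norm_star]; ring
    have hcs : ‖x‖ ≤ ‖T v - z • v‖ * ‖v‖ := p_cauchy_schwarz _ _
    have hhn : ‖h‖ = ‖v‖ ^ 2 := p_norm_inner_self v
    have final : 2 * |z.im| * ‖v‖^2 ≤ 2 * (‖T v - z • v‖ * ‖v‖) := by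
      calc 2 * |z.im| * ‖v‖^2 = (2*|z.im|) * ‖h‖ := by rw [hhn]
        _ = ‖x - star x‖ := hnorm1.symm
        _ ≤ 2 * ‖x‖ := hnorm2
        _ ≤ 2 * (‖T v - z • v‖ * ‖v‖) := by linarith
    nlinarith [abs_nonneg z.im, norm_nonneg (T v - z • v)]
  -- main argument
  by_contra hT
  have h0 : (0:ℂ) ∈ spectrum ℂ T := by
    rw [spectrum.mem_iff]
    intro hu
    rw [map_zero, zero_sub] at hu
    exact hT (by simpa using hu.neg)
  set S := spectrum ℂ T with hS
  set Q : Set ℝ := Set.Ici (0:ℝ) ∩ ((fun t : ℝ => (t:ℂ) * Complex.I) ⁻¹' S) with hQ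
  have hQ0 : (0:ℝ) ∈ Q := by
    exact ⟨Set.mem_Ici.mpr le_rfl, show ((0:ℝ):ℂ) * Complex.I ∈ S by simpa using h0⟩
  have hQbdd : BddAbove Q := by
    refine ⟨‖T‖, fun t ht => ?_⟩
    have h1 : ‖(t:ℂ) * Complex.I‖ ≤ ‖T‖ := spectrum.norm_le_norm_of_mem ht.2
    have h2 : ‖(t:ℂ) * Complex.I‖ = |t| := by simp
    rw [h2, abs_of_nonneg ht.1] at h1
    exact h1
  have hQclosed : IsClosed Q := by
    apply IsClosed.inter isClosed_Ici
    exact (spectrum.isClosed T).preimage (by continuity)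
  set t₀ := sSup Q with ht₀
  have hmem := hQclosed.csSup_mem ⟨0, hQ0⟩ hQbdd
  have ht₀0 : 0 ≤ t₀ := hmem.1
  have hzS : ((t₀:ℂ) * Complex.I) ∈ S := hmem.2
  set z := (t₀:ℂ) * Complex.I with hz
  have happr : ∀ ε : ℝ, 0 < ε → ∃ w : ℂ, w ∉ spectrum ℂ T ∧ ‖w - z‖ < ε := by
    intro ε hε
    refine ⟨((t₀ + ε/2 : ℝ):ℂ) * Complex.I, ?_, ?_⟩
    · intro hwS
      have : (t₀ + ε/2) ∈ Q := ⟨Set.mem_Ici.mpr (by linarith), hwS⟩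
      have := le_csSup hQbdd this
      linarith
    · have : ((t₀ + ε/2 : ℝ):ℂ) * Complex.I - z = ((ε/2 : ℝ):ℂ) * Complex.I := by
        rw [hz]; push_cast; ring
      rw [this]
      have : ‖((ε/2 : ℝ):ℂ) * Complex.I‖ = ε/2 := by
        simp [abs_of_nonneg hε.le]
      rw [this]; linarith
  rcases eq_or_lt_of_le ht₀0 with heq | hlt
  · -- t₀ = 0, z = 0, use hbdd
    apply resolvent_contra T z hzS happr c hc
    intro v
    have : z = 0 := by rw [hz, ← heq]; simp
    rw [this, zero_smul, sub_zero]
    exact hbdd v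
  · -- t₀ > 0, use imaginary bound
    apply resolvent_contra T z hzS happr t₀ hlt
    intro v
    have : |z.im| = t₀ := by
      rw [hz]
      simp [abs_of_nonneg ht₀0]
    rw [← this]
    exact himb z v


end PHMaux

set_option maxHeartbeats 1000000 in
open PHMaux in
/-- Remark 5: under the hypotheses of Lemma 9, for all nonzero complex
scalars `λ, μ`, the map `λ σ ∘ σ* + μ σ'* ∘ σ'` is a bijective (continuous `A`-linear)
automorphism of `V`. Here the complex scalar action on `V` is the one induced from the
`A`-action (`V` is a `ℂ`-module compatibly with the `A`-module structure). -/
theorem scaled_laplacian_of_exact_sequence_bijective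
    {A : Type*} [CStarAlgebra A] [PartialOrder A] [StarOrderedRing A]
    {U V W : Type*}
    [NormedAddCommGroup U] [Module A U] [PreHilbertModule A U] [CompleteSpace U]
    [NormedAddCommGroup V] [Module A V] [PreHilbertModule A V] [CompleteSpace V]
    [Module ℂ V] [IsScalarTower ℂ A V]
    [NormedAddCommGroup W] [Module A W] [PreHilbertModule A W] [CompleteSpace W]
    (σ : U →L[A] V) (σs : V →L[A] U) (σ' : V →L[A] W) (σ's : W →L[A] V)
    (hσ : ∀ (u : U) (v : V), inner A (σ u) v = inner A u (σs v))
    (hσ' : ∀ (v : V) (w : W), inner A (σ' v) w = inner A v (σ's w))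
    (hexact : LinearMap.range (σ : U →ₗ[A] V) = LinearMap.ker (σ' : V →ₗ[A] W))
    (hclosed : IsClosed (LinearMap.range (σ' : V →ₗ[A] W) : Set W)) :
    ∀ (lam mu : ℂ), lam ≠ 0 → mu ≠ 0 →
      Function.Bijective (fun v : V => lam • σ (σs v) + mu • σ's (σ' v)) := by
  intro lam mu hlam hmu
  rcases subsingleton_or_nontrivial V with hV | hV
  · exact ⟨fun a b _ => Subsingleton.elim a b, fun v => ⟨v, Subsingleton.elim _ _⟩⟩
  -- basic facts
  have h1A : ‖(1:A)‖ ≤ 1 := by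
    have h := CStarRing.norm_star_mul_self (x := (1:A))
    simp only [star_one, one_mul] at h
    nlinarith [norm_nonneg (1:A)]
  have hsmulV : ∀ (c : ℂ) (v : V), c • v = (c • (1:A)) • v := fun c v => by
    rw [smul_assoc, one_smul]
  letI : NormedSpace ℂ V :=
    { norm_smul_le := fun c v => by
        rw [hsmulV c v]
        calc ‖(c • (1:A)) • v‖ ≤ ‖c • (1:A)‖ * ‖v‖ := p_norm_smul_le _ _
          _ ≤ (‖c‖ * ‖(1:A)‖) * ‖v‖ := by rw [norm_smul]
          _ ≤ ‖c‖ * ‖v‖ :=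
              mul_le_mul_of_nonneg_right
                (mul_le_of_le_one_right (norm_nonneg c) h1A) (norm_nonneg v) }
  -- kernel facts
  have hker : ∀ u : U, σ' (σ u) = 0 := by
    intro u
    have : σ u ∈ LinearMap.ker (σ' : V →ₗ[A] W) := hexact ▸ LinearMap.mem_range_self σ.toLinearMap u
    exact LinearMap.mem_ker.mp this
  have hss' : ∀ w : W, σs (σ's w) = 0 := by
    intro w
    set q := σs (σ's w) with hq
    have h1 : (inner A q q : A) = inner A (σ q) (σ's w) := (hσ q (σ's w)).symm
    have h2 : (inner A (σ q) (σ's w) : A) = inner A (σ' (σ q)) w := (hσ' (σ q) w).symm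
    rw [h2, hker q, p_inner_zero_left] at h1
    exact (PreHilbertModule.inner_self_eq_zero q).mp h1
  -- open mapping constants (Banach machinery scoped inside)
  have hconst : ∃ C1 : ℝ, 0 < C1 ∧ ∃ C2 : ℝ, 0 < C2 ∧
      (∀ v : V, ∃ x : V, σ' x = σ' v ∧ ‖x‖ ≤ C1 * ‖σ' v‖) ∧
      (∀ p : V, p ∈ Set.range ⇑σ → ∃ u : U, σ u = p ∧ ‖u‖ ≤ C2 * ‖p‖) := by
    letI : Module ℂ U := Module.compHom U (algebraMap ℂ A)
    have hsmulU : ∀ (c : ℂ) (u : U), c • u = (algebraMap ℂ A c) • u := fun _ _ => rfl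
    letI : NormedSpace ℂ U :=
      { norm_smul_le := fun c u => by
          rw [hsmulU c u]
          calc ‖(algebraMap ℂ A c) • u‖ ≤ ‖algebraMap ℂ A c‖ * ‖u‖ := p_norm_smul_le _ _
            _ ≤ ‖c‖ * ‖u‖ := by
                have h2 : ‖algebraMap ℂ A c‖ ≤ ‖c‖ := by
                  rw [Algebra.algebraMap_eq_smul_one, norm_smul]
                  exact mul_le_of_le_one_right (norm_nonneg c) h1A
                exact mul_le_mul_of_nonneg_right h2 (norm_nonneg u) }
    letI : Module ℂ W := Module.compHom W (algebraMap ℂ A)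
    have hsmulW : ∀ (c : ℂ) (w : W), c • w = (algebraMap ℂ A c) • w := fun _ _ => rfl
    letI : NormedSpace ℂ W :=
      { norm_smul_le := fun c w => by
          rw [hsmulW c w]
          calc ‖(algebraMap ℂ A c) • w‖ ≤ ‖algebraMap ℂ A c‖ * ‖w‖ := p_norm_smul_le _ _
            _ ≤ ‖c‖ * ‖w‖ := by
                have h2 : ‖algebraMap ℂ A c‖ ≤ ‖c‖ := by
                  rw [Algebra.algebraMap_eq_smul_one, norm_smul]
                  exact mul_le_of_le_one_right (norm_nonneg c) h1A
                exact mul_le_mul_of_nonneg_right h2 (norm_nonneg w) }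
    let Kσ : Submodule ℂ V :=
      { carrier := Set.range ⇑σ
        add_mem' := by rintro a b ⟨u1, rfl⟩ ⟨u2, rfl⟩; exact ⟨u1 + u2, map_add σ u1 u2⟩
        zero_mem' := ⟨0, map_zero σ⟩
        smul_mem' := by
          rintro c v ⟨u, rfl⟩
          exact ⟨(c • (1:A)) • u, by rw [map_smul]; exact (hsmulV c (σ u)).symm⟩ }
    have hKσclosed : IsClosed (Kσ : Set V) := by
      have h1 : (Kσ : Set V) = (LinearMap.ker (σ' : V →ₗ[A] W) : Set V) := by
        ext v
        constructor
        · rintro ⟨u, rfl⟩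
          exact hexact ▸ LinearMap.mem_range_self σ.toLinearMap u
        · intro hv
          have : v ∈ LinearMap.range (σ : U →ₗ[A] V) := hexact.symm ▸ hv
          obtain ⟨u, hu⟩ := this
          exact ⟨u, hu⟩
      rw [h1]
      have : (LinearMap.ker (σ' : V →ₗ[A] W) : Set V) = ⇑σ' ⁻¹' {0} := by
        ext v; simp [LinearMap.mem_ker]
      rw [this]
      exact IsClosed.preimage σ'.continuous isClosed_singleton
    haveI : CompleteSpace Kσ := hKσclosed.completeSpace_coe
    let Kσ' : Submodule ℂ W :=
      { carrier := Set.range ⇑σ'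
        add_mem' := by rintro a b ⟨v1, rfl⟩ ⟨v2, rfl⟩; exact ⟨v1 + v2, map_add σ' v1 v2⟩
        zero_mem' := ⟨0, map_zero σ'⟩
        smul_mem' := by
          rintro c w ⟨v, rfl⟩
          exact ⟨(algebraMap ℂ A c) • v, by rw [map_smul]; rfl⟩ }
    have hKσ'closed : IsClosed (Kσ' : Set W) := by
      have h1 : (Kσ' : Set W) = (LinearMap.range (σ' : V →ₗ[A] W) : Set W) := by
        ext w
        constructor
        · rintro ⟨v, rfl⟩; exact LinearMap.mem_range_self σ'.toLinearMap v
        · rintro ⟨v, hv⟩; exact ⟨v, hv⟩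
      rw [h1]; exact hclosed
    haveI : CompleteSpace Kσ' := hKσ'closed.completeSpace_coe
    let f1 : U →L[ℂ] Kσ :=
      { toFun := fun u => ⟨σ u, ⟨u, rfl⟩⟩
        map_add' := fun a b => Subtype.ext (map_add σ a b)
        map_smul' := fun c u => Subtype.ext (by
          show σ ((algebraMap ℂ A c) • u) = c • (σ u)
          rw [map_smul, Algebra.algebraMap_eq_smul_one]
          exact (hsmulV c (σ u)).symm)
        cont := Continuous.subtype_mk σ.continuous _ }
    have hsurj1 : Function.Surjective f1 := by
      rintro ⟨v, u, rfl⟩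
      exact ⟨u, rfl⟩
    let f2 : V →L[ℂ] Kσ' :=
      { toFun := fun v => ⟨σ' v, ⟨v, rfl⟩⟩
        map_add' := fun a b => Subtype.ext (map_add σ' a b)
        map_smul' := fun c v => Subtype.ext (by
          show σ' (c • v) = (algebraMap ℂ A c) • (σ' v)
          rw [hsmulV c v, map_smul, Algebra.algebraMap_eq_smul_one])
        cont := Continuous.subtype_mk σ'.continuous _ }
    have hsurj2 : Function.Surjective f2 := by
      rintro ⟨w, v, rfl⟩
      exact ⟨v, rfl⟩
    obtain ⟨C2, hC2pos, hC2⟩ := f1.exists_preimage_norm_le hsurj1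
    obtain ⟨C1, hC1pos, hC1⟩ := f2.exists_preimage_norm_le hsurj2
    refine ⟨C1, hC1pos, C2, hC2pos, ?_, ?_⟩
    · intro v
      obtain ⟨x, hx1, hx2⟩ := hC1 ⟨σ' v, ⟨v, rfl⟩⟩
      exact ⟨x, congrArg Subtype.val hx1, hx2⟩
    · intro p hp
      obtain ⟨u, hu1, hu2⟩ := hC2 ⟨p, hp⟩
      exact ⟨u, congrArg Subtype.val hu1, hu2⟩
  obtain ⟨C1, hC1pos, C2, hC2pos, hC1, hC2⟩ := hconst
  -- the ℂ-linear versions of the operators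
  have mkC : ∀ f : V →L[A] V, ∃ g : V →L[ℂ] V, ∀ v, g v = f v := by
    intro f
    refine ⟨{ toFun := ⇑f
              map_add' := map_add f
              map_smul' := fun c v => by
                simp only [RingHom.id_apply]
                rw [hsmulV c v, map_smul, ← hsmulV]
              cont := f.cont }, fun v => rfl⟩
  obtain ⟨d1, hd1v⟩ := mkC (σ.comp σs)
  obtain ⟨d2, hd2v⟩ := mkC (σ's.comp σ')
  simp only [ContinuousLinearMap.comp_apply] at hd1v hd2v
  set e : V →L[ℂ] V := d1 + d2 with he
  have hev : ∀ v : V, e v = σ (σs v) + σ's (σ' v) := by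
    intro v
    rw [he, ContinuousLinearMap.add_apply, hd1v, hd2v]
  -- symmetry of e
  have hsymE : ∀ v w : V, (inner A (e v) w : A) = inner A v (e w) := by
    intro v w
    rw [hev, hev, p_inner_add_left, p_inner_add_right]
    congr 1
    · calc (inner A (σ (σs v)) w : A) = inner A (σs v) (σs w) := hσ _ _
        _ = star (inner A (σs w) (σs v) : A) := (p_star_inner _ _).symm
        _ = star (inner A (σ (σs w)) v : A) := by rw [hσ]
        _ = inner A v (σ (σs w)) := p_star_inner _ _
    · calc (inner A (σ's (σ' v)) w : A) = star (inner A w (σ's (σ' v)) : A) := (p_star_inner w _).symm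
        _ = star (inner A (σ' w) (σ' v) : A) := by rw [hσ' w (σ' v)]
        _ = inner A (σ' v) (σ' w) := p_star_inner _ _
        _ = inner A v (σ's (σ' w)) := hσ' v (σ' w)
  -- boundedness below of e
  set CK : ℝ := C1 + C2 + C1*C2 + 1 with hCK
  have hCK1 : 1 ≤ CK := by nlinarith
  have hCKpos : 0 < CK := by linarith
  have h4CK : (0:ℝ) < 4*CK^2 := by nlinarith [mul_pos hCKpos hCKpos]
  clear_value CK
  have hbddE : ∀ v : V, (1/(4*CK^2)) * ‖v‖ ≤ ‖e v‖ := by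
    intro v
    obtain ⟨x, hxeq', hxle'⟩ := hC1 v
    have hp : v - x ∈ Set.range ⇑σ := by
      have h0 : σ' (v - x) = 0 := by rw [map_sub, hxeq', sub_self]
      have hker2 : v - x ∈ LinearMap.ker (σ' : V →ₗ[A] W) := LinearMap.mem_ker.mpr h0
      rw [← hexact] at hker2
      obtain ⟨u0, hu0⟩ := hker2
      exact ⟨u0, hu0⟩
    obtain ⟨u, hueq', hule'⟩ := hC2 (v - x) hp
    set n : ℝ := ‖v‖ with hn
    set s : ℝ := ‖σ' v‖ with hs
    set t : ℝ := ‖σs v‖ with ht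
    have hs0 : 0 ≤ s := norm_nonneg _
    have ht0 : 0 ≤ t := norm_nonneg _
    have hn0 : 0 ≤ n := norm_nonneg _
    clear_value n s t
    have hvx : ‖v - x‖ ≤ n + C1 * s := by
      calc ‖v - x‖ ≤ ‖v‖ + ‖x‖ := norm_sub_le _ _
        _ ≤ n + C1 * s := by rw [hn]; linarith
    -- main inequality
    have hineq : n^2 ≤ C2*(n + C1*s)*t + C1*s*n := by
      have hsplit : (inner A v v : A) = inner A (v - x) v + inner A x v := by
        rw [← p_inner_add_left, sub_add_cancel]
      have hnorm_split : n^2 ≤ ‖(inner A (v - x) v : A)‖ + ‖(inner A x v : A)‖ := by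
        rw [hn, ← p_norm_inner_self (A := A) v, hsplit]
        exact norm_add_le _ _
      have hterm2 : ‖(inner A x v : A)‖ ≤ (C1 * s) * n := by
        calc ‖(inner A x v : A)‖ ≤ ‖x‖ * ‖v‖ := p_cauchy_schwarz _ _
          _ ≤ (C1 * s) * n := by
              rw [← hn]
              exact mul_le_mul_of_nonneg_right hxle' hn0
      have hterm1 : ‖(inner A (v - x) v : A)‖ ≤ C2*(n + C1*s)*t := by
        have heq2 : (inner A (v - x) v : A) = inner A u (σs v) := by
          rw [← hueq']
          exact hσ u v
        calc ‖(inner A (v - x) v : A)‖ = ‖(inner A u (σs v) : A)‖ := by rw [heq2]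
          _ ≤ ‖u‖ * ‖σs v‖ := p_cauchy_schwarz _ _
          _ ≤ (C2 * (n + C1*s)) * t := by
              rw [← ht]
              apply mul_le_mul_of_nonneg_right _ ht0
              calc ‖u‖ ≤ C2 * ‖v - x‖ := hule'
                _ ≤ C2 * (n + C1*s) := mul_le_mul_of_nonneg_left hvx hC2pos.le
          _ = C2*(n + C1*s)*t := by ring
      linarith
    set m : ℝ := max s t with hm
    have hsm : s ≤ m := le_max_left _ _
    have htm : t ≤ m := le_max_right _ _
    have hm0 : 0 ≤ m := le_trans hs0 hsm
    clear_value m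
    -- n ≤ 2*(CK*m)
    have hkey : n ≤ 2*(CK*m) := by
      have hstep : n^2 ≤ CK*(m*n) + CK*(m*m) := by
        have hmn : 0 ≤ m*n := mul_nonneg hm0 hn0
        have e1 : C2*(n + C1*s)*t ≤ C2*(n*m) + (C1*C2)*(m*m) := by
          have : C2*(n + C1*s)*t = C2*(n*t) + (C1*C2)*(s*t) := by ring
          rw [this]
          have q1 : n*t ≤ n*m := mul_le_mul_of_nonneg_left htm hn0
          have q2 : s*t ≤ m*m := mul_le_mul hsm htm ht0 hm0
          have q3 : C2*(n*t) ≤ C2*(n*m) := mul_le_mul_of_nonneg_left q1 hC2pos.le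
          have q4 : (C1*C2)*(s*t) ≤ (C1*C2)*(m*m) :=
            mul_le_mul_of_nonneg_left q2 (by positivity)
          linarith
        have e2 : C1*s*n ≤ C1*(m*n) := by
          have : C1*s*n = C1*(s*n) := by ring
          rw [this]
          exact mul_le_mul_of_nonneg_left
            (mul_le_mul_of_nonneg_right hsm hn0) hC1pos.le
        have e5 : (C1*C2)*(m*m) ≤ CK*(m*m) := by
          have hmm : 0 ≤ m*m := mul_nonneg hm0 hm0
          have : C1*C2 ≤ CK := by nlinarith
          exact mul_le_mul_of_nonneg_right this hmm
        have e6 : C2*(n*m) + C1*(m*n) ≤ CK*(m*n) := by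
          have hsum : C1 + C2 ≤ CK := by nlinarith
          calc C2*(n*m) + C1*(m*n) = (C1+C2)*(m*n) := by ring
            _ ≤ CK*(m*n) := mul_le_mul_of_nonneg_right hsum hmn
        linarith [e1, e2, e5, e6, hineq]
      by_contra hgt
      push_neg at hgt
      have hCKm0 : 0 ≤ CK * m := mul_nonneg hCKpos.le hm0
      have hnpos : 0 < n := lt_of_le_of_lt (by linarith) hgt
      have hCm : CK * m < n / 2 := by linarith
      have hmCKm : m ≤ CK * m := by nlinarith
      have h1 : CK*(m*n) ≤ (n/2)*n := by
        have : CK*(m*n) = (CK*m)*n := by ring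
        rw [this]
        exact mul_le_mul_of_nonneg_right hCm.le hn0
      have h2 : CK*(m*m) ≤ (n/2)*(n/2) := by
        have : CK*(m*m) = (CK*m)*m := by ring
        rw [this]
        calc (CK*m)*m ≤ (n/2)*m := mul_le_mul_of_nonneg_right hCm.le hm0
          _ ≤ (n/2)*(CK*m) := mul_le_mul_of_nonneg_left hmCKm (by linarith)
          _ ≤ (n/2)*(n/2) := mul_le_mul_of_nonneg_left hCm.le (by linarith)
      nlinarith [hstep, h1, h2, hnpos]
    -- ‖e v‖ * n ≥ m^2
    have hEin : (inner A (e v) v : A) = inner A (σs v) (σs v) + inner A (σ' v) (σ' v) := by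
      rw [hev, p_inner_add_left]
      congr 1
      · exact hσ (σs v) v
      · calc (inner A (σ's (σ' v)) v : A) = star (inner A v (σ's (σ' v)) : A) :=
              (p_star_inner v _).symm
          _ = star (inner A (σ' v) (σ' v) : A) := by rw [hσ' v (σ' v)]
          _ = inner A (σ' v) (σ' v) := p_star_inner _ _
    have hmax2 : m^2 ≤ ‖(inner A (e v) v : A)‖ := by
      rw [hEin]
      rcases max_cases s t with ⟨hmeq, _⟩ | ⟨hmeq, _⟩
      · rw [hm, hmeq, hs, ← p_norm_inner_self (A := A) (σ' v)]
        apply CStarAlgebra.norm_le_norm_of_nonneg_of_le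
          (PreHilbertModule.inner_self_nonneg (σ' v))
        exact le_add_of_nonneg_left (PreHilbertModule.inner_self_nonneg (σs v))
      · rw [hm, hmeq, ht, ← p_norm_inner_self (A := A) (σs v)]
        apply CStarAlgebra.norm_le_norm_of_nonneg_of_le
          (PreHilbertModule.inner_self_nonneg (σs v))
        exact le_add_of_nonneg_right (PreHilbertModule.inner_self_nonneg (σ' v))
    have hEn : m^2 ≤ ‖e v‖ * n := by
      calc m^2 ≤ ‖(inner A (e v) v : A)‖ := hmax2
        _ ≤ ‖e v‖ * ‖v‖ := p_cauchy_schwarz _ _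
        _ = ‖e v‖ * n := by rw [hn]
    rcases eq_or_lt_of_le hn0 with hn_eq | hn_pos
    · rw [← hn_eq, mul_zero]
      exact norm_nonneg _
    · have hEvn : 0 ≤ ‖e v‖ := norm_nonneg _
      rw [div_mul_eq_mul_div, one_mul, div_le_iff₀ h4CK]
      have hstep2 : n * n ≤ (2*CK) * ((2*CK) * (m*m)) := by
        calc n*n ≤ (2*(CK*m))*n := mul_le_mul_of_nonneg_right hkey hn0
          _ = (2*CK)*(m*n) := by ring
          _ ≤ (2*CK)*(m*(2*(CK*m))) := by
              apply mul_le_mul_of_nonneg_left _ (by linarith)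
              exact mul_le_mul_of_nonneg_left hkey hm0
          _ = (2*CK)*((2*CK)*(m*m)) := by ring
      have hstep3 : (2*CK)*((2*CK)*(m*m)) ≤ (4*CK^2) * (‖e v‖ * n) := by
        calc (2*CK)*((2*CK)*(m*m)) = (4*CK^2)*(m*m) := by ring
          _ ≤ (4*CK^2)*(‖e v‖*n) := by
              apply mul_le_mul_of_nonneg_left _ h4CK.le
              calc m*m = m^2 := by ring
                _ ≤ ‖e v‖ * n := hEn
      have hfin : n * n ≤ (‖e v‖*(4*CK^2)) * n := by nlinarith [hstep2, hstep3]
      exact le_of_mul_le_mul_right hfin hn_pos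
  -- e is invertible
  have heunit : IsUnit e :=
    isUnit_of_symm_of_bddBelow (A := A) e hsymE (1/(4*CK^2)) (one_div_pos.mpr h4CK) hbddE
  obtain ⟨uE, huE⟩ := heunit
  set r : V →L[ℂ] V := ↑uE⁻¹ with hr
  have her : e * r = 1 := by rw [hr, ← huE]; exact uE.mul_inv
  have hre : r * e = 1 := by rw [hr, ← huE]; exact uE.inv_mul
  -- algebraic identities
  have hd12 : d1 * d2 = 0 := by
    ext v
    show d1 (d2 v) = 0
    rw [hd2v, hd1v, hss', map_zero]
  have hd21 : d2 * d1 = 0 := by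
    ext v
    show d2 (d1 v) = 0
    rw [hd1v, hd2v, hker, map_zero]
  have hcomm1 : Commute d1 e := by
    show d1 * e = e * d1
    simp [he, mul_add, add_mul, hd12, hd21]
  have hcomm2 : Commute d2 e := by
    show d2 * e = e * d2
    simp [he, mul_add, add_mul, hd12, hd21]
  have hcommr1 : Commute d1 r := by
    have h := hcomm1
    rw [← huE] at h
    exact (h.units_inv_right : Commute d1 ↑uE⁻¹)
  have hcommr2 : Commute d2 r := by
    have h := hcomm2
    rw [← huE] at h
    exact (h.units_inv_right : Commute d2 ↑uE⁻¹)
  set g : V →L[ℂ] V := lam • d1 + mu • d2 with hg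
  set y : V →L[ℂ] V := (lam⁻¹ • d1 + mu⁻¹ • d2) with hy
  set xinv : V →L[ℂ] V := y * (r * r) with hxinv
  have hcross : g * y = d1 * d1 + d2 * d2 := by
    rw [hg, hy]
    simp only [add_mul, mul_add, smul_mul_assoc, mul_smul_comm, smul_smul, hd12, hd21,
      smul_zero, add_zero, zero_add, mul_inv_cancel₀ hlam, mul_inv_cancel₀ hmu,
      inv_mul_cancel₀ hlam, inv_mul_cancel₀ hmu, one_smul]
  have hcross' : y * g = d1 * d1 + d2 * d2 := by
    rw [hy, hg]
    simp only [add_mul, mul_add, smul_mul_assoc, mul_smul_comm, smul_smul, hd12, hd21,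
      smul_zero, add_zero, zero_add, inv_mul_cancel₀ hlam, inv_mul_cancel₀ hmu,
      mul_inv_cancel₀ hlam, mul_inv_cancel₀ hmu, one_smul]
  have hsq : d1 * d1 + d2 * d2 = e * e := by
    simp [he, mul_add, add_mul, hd12, hd21]
  have heerr : (e * e) * (r * r) = 1 := by
    have h1 : (e * e) * (r * r) = e * ((e * r) * r) := by
      rw [mul_assoc e e (r*r), mul_assoc e r r]
    rw [h1, her, one_mul, her]
  have hgx : g * xinv = 1 := by
    calc g * xinv = (g * y) * (r * r) := by rw [hxinv, mul_assoc g y (r*r)]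
      _ = (e * e) * (r * r) := by rw [hcross, hsq]
      _ = 1 := heerr
  have hcommgr : Commute g (r * r) := by
    have h1 : Commute g r := by
      rw [hg]
      exact ((hcommr1.smul_left lam).add_left (hcommr2.smul_left mu))
    exact h1.mul_right h1
  have hxg : xinv * g = 1 := by
    calc xinv * g = (y * (r*r)) * g := by rw [hxinv]
      _ = y * ((r*r) * g) := mul_assoc _ _ _
      _ = y * (g * (r*r)) := by rw [← hcommgr.eq]
      _ = (y * g) * (r*r) := (mul_assoc _ _ _).symm
      _ = (e * e) * (r * r) := by rw [hcross', hsq]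
      _ = 1 := heerr
  -- conclude
  have hfun : (fun v : V => lam • σ (σs v) + mu • σ's (σ' v)) = ⇑g := by
    funext v
    rw [hg, ContinuousLinearMap.add_apply, ContinuousLinearMap.smul_apply,
      ContinuousLinearMap.smul_apply, hd1v, hd2v]
  rw [hfun]
  constructor
  · intro a b hab
    calc a = (xinv * g) a := by rw [hxg]; rfl
      _ = xinv (g a) := rfl
      _ = xinv (g b) := by rw [hab]
      _ = (xinv * g) b := rfl
      _ = b := by rw [hxg]; rfl
  · intro v
    refine ⟨xinv v, ?_⟩
    calc g (xinv v) = (g * xinv) v := rfl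
      _ = v := by rw [hgx]; rfl
end
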